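/- arXiv:1303.6934 — 3 statements merged into one kernel-verified Lean document; each statement's English description precedes it below -/
import Mathlib

section
/- Let n ≥ 1 be an integer. There exists a constant K > 0, depending only on n, with the following property. Let s ∈ (0,1), let f ∈ L²(Ω), let λ > I, let u be a weak solution of the fractional Laplacian problem and ũ a weak solution of the truncated nonlocal problem, both with the same data f. Assume C₁ > 0 is such that C₁·‖v‖_{H^s(Ω∪Ω_I)} ≤ |||v||| for every test function v. Then both ‖u − ũ‖_{H^s(Ω∪Ω_I)} ≤ (K/(C₁²·s·(λ−I)^{2s}))·‖u‖_{L²(Ω)} and ‖u − ũ‖_{L²(Ω)} ≤ (K/(C₁²·s·(λ−I)^{2s}))·‖u‖_{L²(Ω)} hold. -/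
open MeasureTheory Real Set

noncomputable section

abbrev Eucl (n : ℕ) := EuclideanSpace ℝ (Fin n)

/-- The normalizing constant `c_{n,s}` of the fractional Laplacian. -/
def cns (n : ℕ) (s : ℝ) : ℝ :=
  s * (2 : ℝ) ^ (2 * s) * Real.Gamma ((n + 2) / 2) /
    (Real.Gamma (1 / 2) * Real.Gamma (1 - s))

/-- The interaction domain `Ω_I = {y ∈ ℝⁿ∖Ω : |y−x| < λ for some x ∈ Ω}`. -/
def interDom {n : ℕ} (Ω : Set (Eucl n)) (lam : ℝ) : Set (Eucl n) :=
  {y | y ∉ Ω ∧ ∃ x ∈ Ω, ‖y - x‖ < lam}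

/-- The bilinear form `B_S(u,v) = ∬_S (u(y)−u(x))(v(y)−v(x))/|y−x|^{n+2s} dy dx`. -/
def Bform {n : ℕ} (s : ℝ) (S : Set (Eucl n × Eucl n)) (u v : Eucl n → ℝ) : ℝ :=
  ∫ p in S, (u p.2 - u p.1) * (v p.2 - v p.1) / ‖p.2 - p.1‖ ^ ((n : ℝ) + 2 * s)

/-- `T = {(x,y) ∈ (Ω∪Ω_I)×(Ω∪Ω_I) : |y−x| < λ}`. -/
def Tset {n : ℕ} (Ω : Set (Eucl n)) (lam : ℝ) : Set (Eucl n × Eucl n) :=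
  {p | p.1 ∈ Ω ∪ interDom Ω lam ∧ p.2 ∈ Ω ∪ interDom Ω lam ∧ ‖p.2 - p.1‖ < lam}

/-- The energy seminorm `|||v||| = ((c_{n,s}/4)·B_T(v,v))^{1/2}`. -/
def energyNorm {n : ℕ} (s : ℝ) (Ω : Set (Eucl n)) (lam : ℝ) (v : Eucl n → ℝ) : ℝ :=
  Real.sqrt (cns n s / 4 * Bform s (Tset Ω lam) v v)

/-- The `H^s(D)` norm `(∫_D v² + B_{D×D}(v,v))^{1/2}`. -/
def HsNorm {n : ℕ} (s : ℝ) (D : Set (Eucl n)) (v : Eucl n → ℝ) : ℝ :=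
  Real.sqrt ((∫ x in D, v x ^ 2) + Bform s (D ×ˢ D) v v)

/-- The `L²(Ω)` norm. -/
def L2NormOn {n : ℕ} (Ω : Set (Eucl n)) (v : Eucl n → ℝ) : ℝ :=
  Real.sqrt (∫ x in Ω, v x ^ 2)

/-- The integrand of `B_S(u,v)`. -/
def gagIntegrand {n : ℕ} (s : ℝ) (u v : Eucl n → ℝ) : Eucl n × Eucl n → ℝ :=
  fun p => (u p.2 - u p.1) * (v p.2 - v p.1) / ‖p.2 - p.1‖ ^ ((n : ℝ) + 2 * s)

/-- A test function: measurable, square-integrable, vanishing a.e. off `Ω`,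
with finite Gagliardo energy. -/
def IsTestFun {n : ℕ} (s : ℝ) (Ω : Set (Eucl n)) (v : Eucl n → ℝ) : Prop :=
  Measurable v ∧ Integrable (fun x => v x ^ 2) ∧ (∀ᵐ x ∂volume, x ∉ Ω → v x = 0) ∧
    Integrable (fun p : Eucl n × Eucl n =>
      (v p.2 - v p.1) ^ 2 / ‖p.2 - p.1‖ ^ ((n : ℝ) + 2 * s))

/-- Weak solution of the fractional Laplacian problem with data `f`. -/
def IsFracSol {n : ℕ} (s : ℝ) (Ω : Set (Eucl n)) (f u : Eucl n → ℝ) : Prop :=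
  IsTestFun s Ω u ∧ ∀ v, IsTestFun s Ω v →
    Integrable (gagIntegrand s u v) ∧
    cns n s / 2 * Bform s Set.univ u v = ∫ x in Ω, f x * v x

/-- Weak solution of the truncated nonlocal problem with data `f`. -/
def IsTruncSol {n : ℕ} (s : ℝ) (Ω : Set (Eucl n)) (lam : ℝ) (f u : Eucl n → ℝ) : Prop :=
  IsTestFun s Ω u ∧ ∀ v, IsTestFun s Ω v →
    IntegrableOn (gagIntegrand s u v) (Tset Ω lam) ∧
    cns n s / 2 * Bform s (Tset Ω lam) u v = ∫ x in Ω, f x * v x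

/-- helper: divide an inequality by a nonnegative denominator -/
lemma aux_div_le_div {a b d : ℝ} (h : a ≤ b) (hd : 0 ≤ d) : a / d ≤ b / d := by
  exact div_le_div_of_nonneg_right h hd


/-- helper: the radial profile of the truncated kernel -/
def k0fun (n : ℕ) (s lam : ℝ) : ℝ → ℝ :=
  fun y => if lam ≤ y then y ^ (-((n : ℝ) + 2 * s)) else 0

lemma k0fun_nonneg (n : ℕ) (s : ℝ) {lam : ℝ} (hlam : 0 < lam) (y : ℝ) :
    0 ≤ k0fun n s lam y := by
  unfold k0fun; split_ifs with h
  · exact Real.rpow_nonneg (le_of_lt (lt_of_lt_of_le hlam h)) _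
  · exact le_refl 0

lemma k0fun_measurable (n : ℕ) (s lam : ℝ) : Measurable (k0fun n s lam) := by
  unfold k0fun
  exact Measurable.ite measurableSet_Ici (by fun_prop) measurable_const

lemma gamma_lower {s : ℝ} (hs0 : 0 < s) (hs1 : s < 1) : Real.exp (-1) ≤ Real.Gamma (1 - s) := by
  have h1s : 0 < 1 - s := by linarith
  rw [Real.Gamma_eq_integral h1s]
  have hInt : IntegrableOn (fun x => Real.exp (-x) * x ^ (1 - s - 1)) (Ioi 0) volume :=
    Real.GammaIntegral_convergent h1s
  have step1 : Real.exp (-1) ≤ ∫ x in Ioc (0:ℝ) 1, Real.exp (-x) * x ^ (1 - s - 1) := by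
    have hconst : (∫ _x in Ioc (0:ℝ) 1, Real.exp (-1)) = Real.exp (-1) := by
      simp [Real.volume_Ioc]
    rw [← hconst]
    refine setIntegral_mono_on (integrableOn_const ?_)
      (hInt.mono_set Ioc_subset_Ioi_self) measurableSet_Ioc ?_
    · rw [Real.volume_Ioc]; simp
    · intro x hx
      have hx0 : 0 < x := hx.1
      have hx1 : x ≤ 1 := hx.2
      have h1 : Real.exp (-1) ≤ Real.exp (-x) := Real.exp_le_exp.2 (by linarith)
      have h2 : (1:ℝ) ≤ x ^ (1 - s - 1) := by
        apply Real.one_le_rpow_of_pos_of_le_one_of_nonpos hx0 hx1; linarith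
      calc Real.exp (-1) = Real.exp (-1) * 1 := (mul_one _).symm
        _ ≤ Real.exp (-x) * x ^ (1 - s - 1) :=
          mul_le_mul h1 h2 zero_le_one (Real.exp_pos _).le
  refine step1.trans (setIntegral_mono_set hInt ?_ ?_)
  · filter_upwards [ae_restrict_mem measurableSet_Ioi] with x hx
    exact mul_nonneg (Real.exp_pos _).le (Real.rpow_nonneg (le_of_lt hx) _)
  · exact HasSubset.Subset.eventuallyLE Ioc_subset_Ioi_self

/-- the shear `(x, y) ↦ (x, y - x)` as a measurable equivalence -/
def shearMap (n : ℕ) : (Eucl n × Eucl n) ≃ᵐ (Eucl n × Eucl n) where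
  toFun := fun p => (p.1, p.2 - p.1)
  invFun := fun p => (p.1, p.2 + p.1)
  left_inv := fun p => by simp
  right_inv := fun p => by simp
  measurable_toFun := measurable_fst.prodMk (measurable_snd.sub measurable_fst)
  measurable_invFun := measurable_fst.prodMk (measurable_snd.add measurable_fst)

lemma shearMap_mp (n : ℕ) :
    MeasurePreserving (shearMap n) (volume : Measure (Eucl n × Eucl n)) volume := by
  have h1 : MeasurePreserving (fun p : Eucl n × Eucl n => (p.1 - p.2, p.2))
      ((volume : Measure (Eucl n)).prod volume) ((volume : Measure (Eucl n)).prod volume) :=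
    measurePreserving_sub_prod volume volume
  have hs : MeasurePreserving (Prod.swap : Eucl n × Eucl n → Eucl n × Eucl n)
      ((volume : Measure (Eucl n)).prod volume) ((volume : Measure (Eucl n)).prod volume) :=
    Measure.measurePreserving_swap
  have hcomp := (hs.comp h1).comp hs
  rw [Measure.volume_eq_prod]
  exact hcomp

lemma integrable_k0 {n : ℕ} {s lam : ℝ} (hs : 0 < s) (hlam : 0 < lam) :
    Integrable (fun z : Eucl n => k0fun n s lam ‖z‖) := by
  have hr : (Module.finrank ℝ (Eucl n) : ℝ) < (n : ℝ) + 2 * s := by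
    rw [finrank_euclideanSpace_fin]; linarith
  have hbig := integrable_one_add_norm (E := Eucl n) (μ := volume) hr
  set r : ℝ := (n : ℝ) + 2 * s with hrdef
  set C : ℝ := (1 + 1 / lam) ^ r with hC
  refine (hbig.const_mul C).mono' (Measurable.aestronglyMeasurable ?_) ?_
  · exact (k0fun_measurable n s lam).comp measurable_norm
  · filter_upwards with z
    rw [Real.norm_eq_abs]
    unfold k0fun
    split_ifs with h
    · have hz : 0 < ‖z‖ := lt_of_lt_of_le hlam h
      have key : 1 + ‖z‖ ≤ (1 + 1 / lam) * ‖z‖ := by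
        have : (1 : ℝ) ≤ ‖z‖ / lam := (le_div_iff₀ hlam).2 (by linarith)
        have h2 : ‖z‖ / lam = (1 / lam) * ‖z‖ := by ring
        nlinarith
      have h1 : (1 + ‖z‖) ^ r ≤ C * ‖z‖ ^ r := by
        rw [hC, ← Real.mul_rpow (by positivity) (norm_nonneg z)]
        exact Real.rpow_le_rpow (by positivity) key (by positivity)
      have h2 : (0:ℝ) < ‖z‖ ^ r := Real.rpow_pos_of_pos hz r
      have h3 : (0:ℝ) < (1 + ‖z‖) ^ r := Real.rpow_pos_of_pos (by positivity) r
      rw [abs_of_nonneg (Real.rpow_nonneg hz.le _), Real.rpow_neg hz.le,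
        Real.rpow_neg (by positivity : (0:ℝ) ≤ 1 + ‖z‖)]
      rw [inv_eq_one_div, inv_eq_one_div, mul_one_div, div_le_div_iff₀ h2 h3]
      nlinarith
    · simp only [abs_zero]
      positivity

lemma integral_k0 {n : ℕ} (hn : 1 ≤ n) {s lam : ℝ} (hs : 0 < s) (hlam : 0 < lam) :
    ∫ z : Eucl n, k0fun n s lam ‖z‖ =
      ((n : ℝ) * (volume (Metric.ball (0 : Eucl n) 1)).toReal) * (lam ^ (-(2 * s)) / (2 * s)) := by
  have hfinrank : 0 < Module.finrank ℝ (Eucl n) := by rw [finrank_euclideanSpace_fin]; omega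
  haveI : Nontrivial (Eucl n) := Module.nontrivial_of_finrank_pos hfinrank
  rw [MeasureTheory.integral_fun_norm_addHaar (volume : Measure (Eucl n)) (k0fun n s lam)]
  have hdim : Module.finrank ℝ (Eucl n) = n := finrank_euclideanSpace_fin
  rw [hdim]
  have hinner : ∫ y in Ioi (0:ℝ), y ^ (n - 1) • k0fun n s lam y
      = lam ^ (-(2*s)) / (2*s) := by
    have hcongr : ∀ y ∈ Ioi (0:ℝ), y ^ (n - 1) • k0fun n s lam y
        = Set.indicator (Ici lam) (fun y : ℝ => y ^ (-1 - 2*s)) y := by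
      intro y hy
      have hy0 : (0:ℝ) < y := hy
      unfold k0fun
      rw [smul_eq_mul]
      by_cases h : lam ≤ y
      · rw [if_pos h, Set.indicator_of_mem (show y ∈ Ici lam from h)]
        rw [← Real.rpow_natCast y (n - 1), ← Real.rpow_add hy0]
        congr 1
        have hcast : ((n - 1 : ℕ) : ℝ) = (n : ℝ) - 1 := by
          rw [Nat.cast_sub hn]; simp
        rw [hcast]; ring
      · rw [if_neg h, Set.indicator_of_notMem (show y ∉ Ici lam from h), mul_zero]
    rw [setIntegral_congr_fun measurableSet_Ioi hcongr,
      setIntegral_indicator measurableSet_Ici]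
    have hset : Ioi (0:ℝ) ∩ Ici lam = Ici lam :=
      inter_eq_self_of_subset_right (fun x hx => lt_of_lt_of_le hlam hx)
    rw [hset, integral_Ici_eq_integral_Ioi,
      integral_Ioi_rpow_of_lt (by linarith : (-1 - 2*s) < -1) hlam]
    have : (-1 - 2*s) + 1 = -(2*s) := by ring
    rw [this]
    rw [neg_div, div_neg, neg_neg]
  rw [hinner, nsmul_eq_mul, smul_eq_mul, measureReal_def]
  ring

lemma cs_integral {α : Type*} [MeasurableSpace α] {μ : Measure α} {u w : α → ℝ}
    (hmu : Measurable u) (hmw : Measurable w)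
    (h2u : Integrable (fun x => u x ^ 2) μ) (h2w : Integrable (fun x => w x ^ 2) μ) :
    ∫ x, |u x| * |w x| ∂μ ≤
      Real.sqrt (∫ x, u x ^ 2 ∂μ) * Real.sqrt (∫ x, w x ^ 2 ∂μ) := by
  set A := Real.sqrt (∫ x, u x ^ 2 ∂μ) with hA
  set B := Real.sqrt (∫ x, w x ^ 2 ∂μ) with hB
  have hIu : 0 ≤ ∫ x, u x ^ 2 ∂μ := integral_nonneg fun x => sq_nonneg _
  have hIw : 0 ≤ ∫ x, w x ^ 2 ∂μ := integral_nonneg fun x => sq_nonneg _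
  have hA2 : A ^ 2 = ∫ x, u x ^ 2 ∂μ := Real.sq_sqrt hIu
  have hB2 : B ^ 2 = ∫ x, w x ^ 2 ∂μ := Real.sq_sqrt hIw
  have hint : Integrable (fun x => |u x| * |w x|) μ := by
    refine ((h2u.add h2w).div_const 2).mono'
      ((hmu.abs.mul hmw.abs).aestronglyMeasurable) ?_
    filter_upwards with x
    rw [Real.norm_eq_abs, abs_of_nonneg (by positivity)]
    simp only [Pi.add_apply]
    nlinarith [sq_nonneg (|u x| - |w x|), sq_abs (u x), sq_abs (w x)]
  by_cases hA0 : A = 0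
  · have : ∫ x, u x ^ 2 ∂μ = 0 := by
      rw [← hA2, hA0]; ring
    have hu0 : (fun x => u x ^ 2) =ᵐ[μ] 0 :=
      (integral_eq_zero_iff_of_nonneg (fun x => sq_nonneg _) h2u).1 this
    have : (fun x => |u x| * |w x|) =ᵐ[μ] 0 := by
      filter_upwards [hu0] with x hx
      have : u x = 0 := by
        have := hx; simpa [pow_eq_zero_iff] using this
      simp [this]
    rw [integral_congr_ae this]
    simp only [Pi.zero_apply, integral_zero, hA0, zero_mul, le_refl]
  by_cases hB0 : B = 0
  · have : ∫ x, w x ^ 2 ∂μ = 0 := by rw [← hB2, hB0]; ring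
    have hw0 : (fun x => w x ^ 2) =ᵐ[μ] 0 :=
      (integral_eq_zero_iff_of_nonneg (fun x => sq_nonneg _) h2w).1 this
    have : (fun x => |u x| * |w x|) =ᵐ[μ] 0 := by
      filter_upwards [hw0] with x hx
      have : w x = 0 := by simpa [pow_eq_zero_iff] using hx
      simp [this]
    rw [integral_congr_ae this]
    simp only [Pi.zero_apply, integral_zero, hB0, mul_zero, le_refl]
  have hApos : 0 < A := lt_of_le_of_ne (Real.sqrt_nonneg _) (Ne.symm hA0)
  have hBpos : 0 < B := lt_of_le_of_ne (Real.sqrt_nonneg _) (Ne.symm hB0)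
  set t : ℝ := B / A with ht
  have htpos : 0 < t := div_pos hBpos hApos
  have key : ∀ x, |u x| * |w x| ≤ (t * u x ^ 2 + t⁻¹ * w x ^ 2) / 2 := by
    intro x
    have h1 : Real.sqrt t ^ 2 = t := Real.sq_sqrt htpos.le
    have h2 : (0:ℝ) < Real.sqrt t := Real.sqrt_pos.2 htpos
    have h3 : ((Real.sqrt t)⁻¹) ^ 2 = t⁻¹ := by rw [inv_pow, h1]
    have h4 : Real.sqrt t * (Real.sqrt t)⁻¹ = 1 := mul_inv_cancel₀ h2.ne'
    have e1 : (Real.sqrt t * |u x| - (Real.sqrt t)⁻¹ * |w x|) ^ 2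
        = t * |u x| ^ 2 + t⁻¹ * |w x| ^ 2 - 2 * (|u x| * |w x|) := by
      have expand : (Real.sqrt t * |u x| - (Real.sqrt t)⁻¹ * |w x|) ^ 2
          = (Real.sqrt t) ^ 2 * |u x| ^ 2 + ((Real.sqrt t)⁻¹) ^ 2 * |w x| ^ 2
            - 2 * (Real.sqrt t * (Real.sqrt t)⁻¹) * (|u x| * |w x|) := by ring
      rw [expand, h1, h3, h4]; ring
    have e2 := sq_nonneg (Real.sqrt t * |u x| - (Real.sqrt t)⁻¹ * |w x|)
    rw [e1] at e2
    rw [sq_abs, sq_abs] at e2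
    linarith
  have hintR : Integrable (fun x => (t * u x ^ 2 + t⁻¹ * w x ^ 2) / 2) μ :=
    ((h2u.const_mul t).add (h2w.const_mul t⁻¹)).div_const 2
  calc ∫ x, |u x| * |w x| ∂μ ≤ ∫ x, (t * u x ^ 2 + t⁻¹ * w x ^ 2) / 2 ∂μ :=
        integral_mono hint hintR key
    _ = (t * ∫ x, u x ^ 2 ∂μ + t⁻¹ * ∫ x, w x ^ 2 ∂μ) / 2 := by
        rw [integral_div, integral_add (h2u.const_mul t) (h2w.const_mul t⁻¹),
          integral_const_mul, integral_const_mul]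
    _ = A * B := by
        rw [← hA2, ← hB2, ht]
        field_simp
        ring

lemma Bform_eq_setIntegral {n : ℕ} (s : ℝ) (S : Set (Eucl n × Eucl n)) (u v : Eucl n → ℝ) :
    Bform s S u v = ∫ p in S, gagIntegrand s u v p := rfl

lemma cns_pos {n : ℕ} {s : ℝ} (hs0 : 0 < s) (hs1 : s < 1) : 0 < cns n s := by
  unfold cns
  have h1 : 0 < Real.Gamma (((n : ℝ) + 2) / 2) := Real.Gamma_pos_of_pos (by positivity)
  have h2 : 0 < Real.Gamma (1 / 2 : ℝ) := Real.Gamma_pos_of_pos (by norm_num)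
  have h3 : 0 < Real.Gamma (1 - s) := Real.Gamma_pos_of_pos (by linarith)
  have h4 : (0 : ℝ) < 2 ^ (2 * s) := Real.rpow_pos_of_pos (by norm_num) _
  exact div_pos (mul_pos (mul_pos hs0 h4) h1) (mul_pos h2 h3)

lemma cns_div_le {n : ℕ} {s : ℝ} (hs0 : 0 < s) (hs1 : s < 1) :
    cns n s / (4 * s) ≤ Real.exp 1 * Real.Gamma (((n : ℝ) + 2) / 2) / Real.sqrt π := by
  unfold cns
  rw [Real.Gamma_one_half_eq]
  have hΓn : 0 < Real.Gamma (((n : ℝ) + 2) / 2) := Real.Gamma_pos_of_pos (by positivity)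
  have hΓs : 0 < Real.Gamma (1 - s) := Real.Gamma_pos_of_pos (by linarith)
  have hπ : 0 < Real.sqrt π := Real.sqrt_pos.2 Real.pi_pos
  have h2s : (2 : ℝ) ^ (2 * s) ≤ 4 := by
    have : (2 : ℝ) ^ (2 * s) ≤ 2 ^ (2 : ℝ) :=
      Real.rpow_le_rpow_of_exponent_le one_le_two (by linarith)
    have h4 : (2 : ℝ) ^ (2 : ℝ) = 4 := by
      rw [show (2 : ℝ) = ((2 : ℕ) : ℝ) by norm_num, Real.rpow_natCast]; norm_num
    linarith
  have h1 : 1 ≤ Real.exp 1 * Real.Gamma (1 - s) := by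
    have hg := gamma_lower hs0 hs1
    have he : Real.exp 1 * Real.exp (-1) = 1 := by rw [← Real.exp_add]; norm_num
    nlinarith [Real.exp_pos 1]
  rw [div_div, div_le_div_iff₀ (by positivity) hπ]
  calc s * 2 ^ (2 * s) * Real.Gamma (((n : ℝ) + 2) / 2) * Real.sqrt π
      ≤ s * 4 * Real.Gamma (((n : ℝ) + 2) / 2) * Real.sqrt π := by
        nlinarith [mul_nonneg (mul_nonneg hs0.le hΓn.le) hπ.le, sub_nonneg.2 h2s,
          mul_nonneg (mul_nonneg (mul_nonneg hs0.le hΓn.le) hπ.le) (sub_nonneg.2 h2s)]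
    _ ≤ (Real.exp 1 * Real.Gamma (1 - s)) *
          (s * 4 * Real.Gamma (((n : ℝ) + 2) / 2) * Real.sqrt π) :=
        le_mul_of_one_le_left (by positivity) h1
    _ = Real.exp 1 * Real.Gamma (((n : ℝ) + 2) / 2) *
          (Real.sqrt π * Real.Gamma (1 - s) * (4 * s)) := by ring

lemma testFun_sub {n : ℕ} {s : ℝ} {Ω : Set (Eucl n)} {u v : Eucl n → ℝ}
    (hu : IsTestFun s Ω u) (hv : IsTestFun s Ω v) : IsTestFun s Ω (u - v) := by
  obtain ⟨hmu, h2u, h0u, hGu⟩ := hu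
  obtain ⟨hmv, h2v, h0v, hGv⟩ := hv
  refine ⟨hmu.sub hmv, ?_, ?_, ?_⟩
  · refine ((h2u.const_mul 2).add (h2v.const_mul 2)).mono'
      (((hmu.sub hmv).pow_const 2).aestronglyMeasurable) ?_
    filter_upwards with x
    rw [Real.norm_eq_abs, abs_of_nonneg (sq_nonneg _)]
    simp only [Pi.sub_apply, Pi.add_apply]
    nlinarith [sq_nonneg (u x + v x)]
  · filter_upwards [h0u, h0v] with x hxu hxv hx
    simp [Pi.sub_apply, hxu hx, hxv hx]
  · refine ((hGu.const_mul 2).add (hGv.const_mul 2)).mono' ?_ ?_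
    · apply Measurable.aestronglyMeasurable
      apply Measurable.div
      · exact (((hmu.sub hmv).comp measurable_snd).sub
          ((hmu.sub hmv).comp measurable_fst)).pow_const 2
      · exact (by fun_prop : Measurable fun p : Eucl n × Eucl n =>
          ‖p.2 - p.1‖ ^ ((n : ℝ) + 2 * s))
    · filter_upwards with p
      have hd0 : 0 ≤ ‖p.2 - p.1‖ ^ ((n : ℝ) + 2 * s) :=
        Real.rpow_nonneg (norm_nonneg _) _
      rw [Real.norm_eq_abs, abs_of_nonneg (div_nonneg (sq_nonneg _) hd0)]
      have hb : ((u - v) p.2 - (u - v) p.1) ^ 2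
          ≤ 2 * (u p.2 - u p.1) ^ 2 + 2 * (v p.2 - v p.1) ^ 2 := by
        simp only [Pi.sub_apply]
        nlinarith [sq_nonneg ((u p.2 - u p.1) + (v p.2 - v p.1))]
      calc ((u - v) p.2 - (u - v) p.1) ^ 2 / ‖p.2 - p.1‖ ^ ((n : ℝ) + 2 * s)
          ≤ (2 * (u p.2 - u p.1) ^ 2 + 2 * (v p.2 - v p.1) ^ 2) /
              ‖p.2 - p.1‖ ^ ((n : ℝ) + 2 * s) := aux_div_le_div hb hd0
        _ = 2 * ((u p.2 - u p.1) ^ 2 / ‖p.2 - p.1‖ ^ ((n : ℝ) + 2 * s)) +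
              2 * ((v p.2 - v p.1) ^ 2 / ‖p.2 - p.1‖ ^ ((n : ℝ) + 2 * s)) := by
            rw [add_div, mul_div_assoc, mul_div_assoc]
set_option maxHeartbeats 1000000 in
/-- For each dimension `n ≥ 1` there is a constant `K > 0`, depending
only on `n`, such that for any `s ∈ (0,1)`, `f ∈ L²(Ω)`, `λ > I = diam Ω`, weak solutions
`u` (fractional Laplacian) and `ũ` (truncated nonlocal), and any `C₁ > 0` with
`C₁·‖v‖_{H^s(Ω∪Ω_I)} ≤ |||v|||` for all test functions `v`, one has
`‖u − ũ‖_{H^s(Ω∪Ω_I)} ≤ (K/(C₁²·s·(λ−I)^{2s}))·‖u‖_{L²(Ω)}` and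
`‖u − ũ‖_{L²(Ω)} ≤ (K/(C₁²·s·(λ−I)^{2s}))·‖u‖_{L²(Ω)}`. -/
theorem stmt1 (n : ℕ) (hn : 1 ≤ n) :
    ∃ K > (0 : ℝ), ∀ (s : ℝ), s ∈ Set.Ioo (0 : ℝ) 1 →
      ∀ (Ω : Set (Eucl n)), Ω.Nonempty → IsOpen Ω → Bornology.IsBounded Ω →
      ∀ (lam : ℝ), Metric.diam Ω < lam →
      ∀ (f : Eucl n → ℝ), Measurable f → IntegrableOn (fun x => f x ^ 2) Ω →
      ∀ (u ut : Eucl n → ℝ),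
        IsFracSol s Ω f u → IsTruncSol s Ω lam f ut →
      ∀ (C₁ : ℝ), 0 < C₁ →
        (∀ v, IsTestFun s Ω v →
          C₁ * HsNorm s (Ω ∪ interDom Ω lam) v ≤ energyNorm s Ω lam v) →
        HsNorm s (Ω ∪ interDom Ω lam) (u - ut) ≤
            K / (C₁ ^ 2 * s * (lam - Metric.diam Ω) ^ (2 * s)) * L2NormOn Ω u ∧
        L2NormOn Ω (u - ut) ≤
            K / (C₁ ^ 2 * s * (lam - Metric.diam Ω) ^ (2 * s)) * L2NormOn Ω u := by
  classical
  set A : ℝ := (n : ℝ) * (volume (Metric.ball (0 : Eucl n) 1)).toReal with hAdef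
  have hA0 : 0 ≤ A := by
    apply mul_nonneg (Nat.cast_nonneg n) ENNReal.toReal_nonneg
  have hΓn : 0 < Real.Gamma (((n : ℝ) + 2) / 2) := Real.Gamma_pos_of_pos (by positivity)
  set Kc : ℝ := Real.exp 1 * Real.Gamma (((n : ℝ) + 2) / 2) / Real.sqrt π * A with hKcdef
  have hKc0 : 0 ≤ Kc := by
    apply mul_nonneg (div_nonneg (mul_nonneg (Real.exp_pos 1).le hΓn.le)
      (Real.sqrt_nonneg π)) hA0
  refine ⟨Kc + 1, by linarith, ?_⟩
  intro s hs Ω hΩne hΩopen hΩbd lam hlamI f hfm hfint u ut hu hut C₁ hC₁ hcoer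
  obtain ⟨hs0, hs1⟩ := hs
  set I : ℝ := Metric.diam Ω with hIdef
  have hI0 : 0 ≤ I := Metric.diam_nonneg
  have hlam0 : 0 < lam := lt_of_le_of_lt hI0 hlamI
  set D : Set (Eucl n) := Ω ∪ interDom Ω lam with hDdef
  set T : Set (Eucl n × Eucl n) := Tset Ω lam with hTdef
  -- test function facts
  have hwT : IsTestFun s Ω (u - ut) := testFun_sub hu.1 hut.1
  have hmu : Measurable u := hu.1.1
  have h2u : Integrable (fun x => u x ^ 2) := hu.1.2.1
  have h0u : ∀ᵐ x ∂(volume : Measure (Eucl n)), x ∉ Ω → u x = 0 := hu.1.2.2.1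
  have h0ut : ∀ᵐ x ∂(volume : Measure (Eucl n)), x ∉ Ω → ut x = 0 := hut.1.2.2.1
  have hmw : Measurable (u - ut) := hwT.1
  have h2w : Integrable (fun x => (u - ut) x ^ 2) := hwT.2.1
  have h0w : ∀ᵐ x ∂(volume : Measure (Eucl n)), x ∉ Ω → (u - ut) x = 0 := hwT.2.2.1
  -- the two weak formulations tested against u - ut
  obtain ⟨hIntU, hEqU⟩ := hu.2 (u - ut) hwT
  obtain ⟨hIntUt, hEqUt⟩ := hut.2 (u - ut) hwT
  have hcpos : 0 < cns n s := cns_pos hs0 hs1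
  have hBeq : Bform s Set.univ u (u - ut) = Bform s T ut (u - ut) :=
    mul_left_cancel₀ (ne_of_gt (div_pos hcpos two_pos)) (hEqU.trans hEqUt.symm)
  -- measurability of T
  have hDmeas : MeasurableSet D := by
    apply hΩopen.measurableSet.union
    have hiD : interDom Ω lam = Ωᶜ ∩ ⋃ x ∈ Ω, Metric.ball x lam := by
      ext y
      simp [interDom, Metric.mem_ball, dist_eq_norm]
    rw [hiD]
    exact (hΩopen.measurableSet.compl).inter
      (isOpen_biUnion fun x _ => Metric.isOpen_ball).measurableSet
  have hTmeas : MeasurableSet T := by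
    have hTeq : T = (Prod.fst ⁻¹' D ∩ Prod.snd ⁻¹' D) ∩
        {p : Eucl n × Eucl n | ‖p.2 - p.1‖ < lam} := by
      ext p
      simp only [hTdef, Tset, hDdef, mem_setOf_eq, mem_inter_iff, mem_preimage]
      tauto
    rw [hTeq]
    have hm3 : MeasurableSet {p : Eucl n × Eucl n | ‖p.2 - p.1‖ < lam} :=
      measurableSet_lt ((measurable_snd.sub measurable_fst).norm) measurable_const
    exact ((measurable_fst hDmeas).inter (measurable_snd hDmeas)).inter hm3
  -- splitting of the full bilinear form
  have hsplit : Bform s Set.univ u (u - ut)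
      = Bform s T u (u - ut) + ∫ p in Tᶜ, gagIntegrand s u (u - ut) p := by
    rw [Bform_eq_setIntegral, Bform_eq_setIntegral, Measure.restrict_univ]
    exact (integral_add_compl hTmeas hIntU).symm
  have hlinT : Bform s T (u - ut) (u - ut)
      = Bform s T u (u - ut) - Bform s T ut (u - ut) := by
    rw [Bform_eq_setIntegral, Bform_eq_setIntegral, Bform_eq_setIntegral,
      ← integral_sub hIntU.integrableOn hIntUt]
    refine integral_congr_ae (Filter.Eventually.of_forall fun p => ?_)
    unfold gagIntegrand
    simp only [Pi.sub_apply]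
    ring
  have hkey : Bform s T (u - ut) (u - ut)
      = - ∫ p in Tᶜ, gagIntegrand s u (u - ut) p := by
    rw [hlinT, ← hBeq, hsplit]; ring
  -- the dominating product kernel
  set g : Eucl n → ℝ := fun x => |u x| * |(u - ut) x| with hgdef
  set kv : Eucl n → ℝ := fun z => k0fun n s lam ‖z‖ with hkvdef
  have hgnn : ∀ x, 0 ≤ g x := fun x => mul_nonneg (abs_nonneg _) (abs_nonneg _)
  have hkvnn : ∀ z, 0 ≤ kv z := fun z => k0fun_nonneg n s hlam0 _
  have hgm : Measurable g := hmu.abs.mul hmw.abs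
  have hkvm : Measurable kv := (k0fun_measurable n s lam).comp measurable_norm
  have hgint : Integrable g := by
    refine ((h2u.add h2w).div_const 2).mono' hgm.aestronglyMeasurable ?_
    filter_upwards with x
    rw [Real.norm_eq_abs, abs_of_nonneg (hgnn x)]
    simp only [Pi.add_apply, hgdef]
    nlinarith [sq_nonneg (|u x| - |(u - ut) x|), sq_abs (u x), sq_abs ((u - ut) x)]
  have hkvint : Integrable kv := integrable_k0 hs0 hlam0
  have hkvval : ∫ z, kv z = A * (lam ^ (-(2 * s)) / (2 * s)) := by
    rw [hkvdef, integral_k0 hn hs0 hlam0, hAdef]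
  -- integrability and value of the two tail majorants via the shear map
  set G : Eucl n × Eucl n → ℝ := fun q => g q.1 * kv q.2 with hGdef
  have hGint : Integrable G (volume : Measure (Eucl n × Eucl n)) := by
    rw [Measure.volume_eq_prod]
    exact hgint.mul_prod hkvint
  have hF1eq : (fun p : Eucl n × Eucl n => g p.1 * kv (p.2 - p.1)) = G ∘ (shearMap n) := rfl
  have hF1int : Integrable (fun p : Eucl n × Eucl n => g p.1 * kv (p.2 - p.1)) := by
    rw [hF1eq]
    exact ((shearMap_mp n).integrable_comp hGint.aestronglyMeasurable).2 hGint
  have hF1val : ∫ p : Eucl n × Eucl n, g p.1 * kv (p.2 - p.1)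
      = (∫ x, g x) * (∫ z, kv z) := by
    rw [hF1eq]
    calc ∫ p : Eucl n × Eucl n, (G ∘ (shearMap n)) p = ∫ q, G q :=
          (shearMap_mp n).integral_comp' G
      _ = (∫ x, g x) * (∫ z, kv z) := by
          rw [Measure.volume_eq_prod]; exact integral_prod_mul g kv
  have hswap_mp : MeasurePreserving (Prod.swap : Eucl n × Eucl n → Eucl n × Eucl n)
      (volume : Measure (Eucl n × Eucl n)) volume := by
    rw [Measure.volume_eq_prod]
    exact Measure.measurePreserving_swap
  have hswap : ∀ p : Eucl n × Eucl n,
      (fun p : Eucl n × Eucl n => g p.1 * kv (p.2 - p.1)) (Prod.swap p)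
        = g p.2 * kv (p.2 - p.1) := by
    intro p
    show g p.2 * kv (p.1 - p.2) = g p.2 * kv (p.2 - p.1)
    rw [hkvdef]
    simp only [norm_sub_rev p.1 p.2]
  have hF2int : Integrable (fun p : Eucl n × Eucl n => g p.2 * kv (p.2 - p.1)) := by
    have hcomp : Integrable ((fun p : Eucl n × Eucl n => g p.1 * kv (p.2 - p.1)) ∘ Prod.swap) :=
      (hswap_mp.integrable_comp hF1int.aestronglyMeasurable).2 hF1int
    exact hcomp.congr (Filter.Eventually.of_forall hswap)
  have hF2val : ∫ p : Eucl n × Eucl n, g p.2 * kv (p.2 - p.1)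
      = (∫ x, g x) * (∫ z, kv z) := by
    rw [← integral_congr_ae (Filter.Eventually.of_forall hswap)]
    calc ∫ p : Eucl n × Eucl n,
          (fun p : Eucl n × Eucl n => g p.1 * kv (p.2 - p.1)) (Prod.swap p)
        = ∫ q : Eucl n × Eucl n, g q.1 * kv (q.2 - q.1) := by
          simpa using hswap_mp.integral_comp MeasurableEquiv.prodComm.measurableEmbedding
            (fun q : Eucl n × Eucl n => g q.1 * kv (q.2 - q.1))
      _ = (∫ x, g x) * (∫ z, kv z) := hF1val
  have hsum_int : Integrable
      (fun p : Eucl n × Eucl n => g p.1 * kv (p.2 - p.1) + g p.2 * kv (p.2 - p.1)) :=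
    hF1int.add hF2int
  have hsum_val : ∫ p : Eucl n × Eucl n, (g p.1 * kv (p.2 - p.1) + g p.2 * kv (p.2 - p.1))
      = 2 * ((∫ x, g x) * (∫ z, kv z)) := by
    rw [integral_add hF1int hF2int, hF1val, hF2val]; ring
  -- a.e. vanishing off Ω in both coordinates
  have hx_ae : ∀ᵐ x ∂(volume : Measure (Eucl n)), x ∉ Ω → u x = 0 ∧ ut x = 0 := by
    filter_upwards [h0u, h0ut] with x h1 h2 hx
    exact ⟨h1 hx, h2 hx⟩
  have hS : volume {x : Eucl n | ¬(x ∉ Ω → u x = 0 ∧ ut x = 0)} = 0 := ae_iff.1 hx_ae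
  have hN1 : ∀ᵐ p : Eucl n × Eucl n ∂volume, p.1 ∉ Ω → u p.1 = 0 ∧ ut p.1 = 0 := by
    rw [ae_iff]
    refine measure_mono_null (fun p hp => ?_)
      (show (volume : Measure (Eucl n × Eucl n))
        ({x : Eucl n | ¬(x ∉ Ω → u x = 0 ∧ ut x = 0)} ×ˢ (univ : Set (Eucl n))) = 0 from ?_)
    · exact ⟨hp, mem_univ _⟩
    · rw [Measure.volume_eq_prod, Measure.prod_prod, hS, zero_mul]
  have hN2 : ∀ᵐ p : Eucl n × Eucl n ∂volume, p.2 ∉ Ω → u p.2 = 0 ∧ ut p.2 = 0 := by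
    rw [ae_iff]
    refine measure_mono_null (fun p hp => ?_)
      (show (volume : Measure (Eucl n × Eucl n))
        ((univ : Set (Eucl n)) ×ˢ {x : Eucl n | ¬(x ∉ Ω → u x = 0 ∧ ut x = 0)}) = 0 from ?_)
    · exact ⟨mem_univ _, hp⟩
    · rw [Measure.volume_eq_prod, Measure.prod_prod, hS, mul_zero]
  -- the pointwise domination on Tᶜ
  have hdom : ∀ᵐ p ∂((volume : Measure (Eucl n × Eucl n)).restrict Tᶜ),
      |gagIntegrand s u (u - ut) p| ≤ g p.1 * kv (p.2 - p.1) + g p.2 * kv (p.2 - p.1) := by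
    filter_upwards [ae_restrict_of_ae hN1, ae_restrict_of_ae hN2,
      ae_restrict_mem hTmeas.compl] with p hp1 hp2 hpT
    have hd0 : 0 ≤ ‖p.2 - p.1‖ ^ ((n : ℝ) + 2 * s) := Real.rpow_nonneg (norm_nonneg _) _
    by_cases h1 : p.1 ∈ Ω <;> by_cases h2 : p.2 ∈ Ω
    · exfalso
      refine hpT ⟨Or.inl h1, Or.inl h2, ?_⟩
      calc ‖p.2 - p.1‖ = dist p.2 p.1 := (dist_eq_norm _ _).symm
        _ ≤ I := Metric.dist_le_diam_of_mem hΩbd h2 h1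
        _ < lam := hlamI
    · -- p.1 ∈ Ω, p.2 ∉ Ω
      obtain ⟨hu2, hut2⟩ := hp2 h2
      have hw2 : (u - ut) p.2 = 0 := by simp [Pi.sub_apply, hu2, hut2]
      have hfar : lam ≤ ‖p.2 - p.1‖ := by
        by_contra hlt
        push_neg at hlt
        exact hpT ⟨Or.inl h1, Or.inr ⟨h2, ⟨p.1, h1, hlt⟩⟩, hlt⟩
      have hkval : kv (p.2 - p.1) = (‖p.2 - p.1‖ ^ ((n : ℝ) + 2 * s))⁻¹ := by
        rw [hkvdef]
        show k0fun n s lam ‖p.2 - p.1‖ = _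
        unfold k0fun
        rw [if_pos hfar, Real.rpow_neg (norm_nonneg _)]
      have hgag : gagIntegrand s u (u - ut) p
          = (u p.1 * (u - ut) p.1) / ‖p.2 - p.1‖ ^ ((n : ℝ) + 2 * s) := by
        unfold gagIntegrand
        rw [hu2, hw2]; ring
      rw [hgag, abs_div, abs_of_nonneg hd0, abs_mul]
      have heq : |u p.1| * |(u - ut) p.1| / ‖p.2 - p.1‖ ^ ((n : ℝ) + 2 * s)
          = g p.1 * kv (p.2 - p.1) := by
        rw [hkval, div_eq_mul_inv]
      rw [heq]
      have h2nn : 0 ≤ g p.2 * kv (p.2 - p.1) := mul_nonneg (hgnn _) (hkvnn _)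
      linarith
    · -- p.1 ∉ Ω, p.2 ∈ Ω
      obtain ⟨hu1, hut1⟩ := hp1 h1
      have hw1 : (u - ut) p.1 = 0 := by simp [Pi.sub_apply, hu1, hut1]
      have hfar : lam ≤ ‖p.2 - p.1‖ := by
        by_contra hlt
        push_neg at hlt
        refine hpT ⟨Or.inr ⟨h1, ⟨p.2, h2, ?_⟩⟩, Or.inl h2, hlt⟩
        rwa [norm_sub_rev]
      have hkval : kv (p.2 - p.1) = (‖p.2 - p.1‖ ^ ((n : ℝ) + 2 * s))⁻¹ := by
        rw [hkvdef]
        show k0fun n s lam ‖p.2 - p.1‖ = _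
        unfold k0fun
        rw [if_pos hfar, Real.rpow_neg (norm_nonneg _)]
      have hgag : gagIntegrand s u (u - ut) p
          = (u p.2 * (u - ut) p.2) / ‖p.2 - p.1‖ ^ ((n : ℝ) + 2 * s) := by
        unfold gagIntegrand
        rw [hu1, hw1]; ring
      rw [hgag, abs_div, abs_of_nonneg hd0, abs_mul]
      have heq : |u p.2| * |(u - ut) p.2| / ‖p.2 - p.1‖ ^ ((n : ℝ) + 2 * s)
          = g p.2 * kv (p.2 - p.1) := by
        rw [hkval, div_eq_mul_inv]
      rw [heq]
      have h1nn : 0 ≤ g p.1 * kv (p.2 - p.1) := mul_nonneg (hgnn _) (hkvnn _)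
      linarith
    · obtain ⟨hu1, hut1⟩ := hp1 h1
      obtain ⟨hu2, hut2⟩ := hp2 h2
      have hgag : gagIntegrand s u (u - ut) p = 0 := by
        unfold gagIntegrand
        rw [hu1, hu2]
        simp
      rw [hgag, abs_zero]
      exact add_nonneg (mul_nonneg (hgnn _) (hkvnn _)) (mul_nonneg (hgnn _) (hkvnn _))
  -- bound on the tail integral
  have habs : |∫ p in Tᶜ, gagIntegrand s u (u - ut) p|
      ≤ 2 * ((∫ x, g x) * (∫ z, kv z)) := by
    calc |∫ p in Tᶜ, gagIntegrand s u (u - ut) p|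
        ≤ ∫ p in Tᶜ, |gagIntegrand s u (u - ut) p| := by
          simpa [Real.norm_eq_abs] using
            norm_integral_le_integral_norm (μ := (volume : Measure (Eucl n × Eucl n)).restrict Tᶜ)
              (gagIntegrand s u (u - ut))
      _ ≤ ∫ p in Tᶜ, (g p.1 * kv (p.2 - p.1) + g p.2 * kv (p.2 - p.1)) :=
          integral_mono_ae hIntU.abs.integrableOn hsum_int.integrableOn hdom
      _ ≤ ∫ p : Eucl n × Eucl n, (g p.1 * kv (p.2 - p.1) + g p.2 * kv (p.2 - p.1)) :=
          setIntegral_le_integral hsum_int (Filter.Eventually.of_forall fun p =>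
            add_nonneg (mul_nonneg (hgnn _) (hkvnn _)) (mul_nonneg (hgnn _) (hkvnn _)))
      _ = 2 * ((∫ x, g x) * (∫ z, kv z)) := hsum_val
  -- Cauchy-Schwarz and norm identifications
  have hCS : (∫ x, g x) ≤ Real.sqrt (∫ x, u x ^ 2) * Real.sqrt (∫ x, (u - ut) x ^ 2) :=
    cs_integral hmu hmw h2u h2w
  have hgnn_int : 0 ≤ ∫ x, g x := integral_nonneg hgnn
  have hL : Real.sqrt (∫ x, u x ^ 2) = L2NormOn Ω u := by
    unfold L2NormOn
    congr 1
    exact (setIntegral_eq_integral_of_ae_compl_eq_zero (by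
      filter_upwards [h0u] with x hx hxΩ
      rw [hx hxΩ]; ring)).symm
  have hWD : ∫ x, (u - ut) x ^ 2 = ∫ x in D, (u - ut) x ^ 2 := by
    refine (setIntegral_eq_integral_of_ae_compl_eq_zero ?_).symm
    filter_upwards [h0w] with x hx hxD
    rw [hx (fun hxΩ => hxD (Or.inl hxΩ))]; ring
  have hWΩ : ∫ x in Ω, (u - ut) x ^ 2 = ∫ x, (u - ut) x ^ 2 :=
    setIntegral_eq_integral_of_ae_compl_eq_zero (by
      filter_upwards [h0w] with x hx hxΩ
      rw [hx hxΩ]; ring)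
  set H : ℝ := HsNorm s D (u - ut) with hHdef
  have hBD_nn : 0 ≤ Bform s (D ×ˢ D) (u - ut) (u - ut) := by
    rw [Bform_eq_setIntegral]
    refine integral_nonneg fun p => ?_
    unfold gagIntegrand
    exact div_nonneg (mul_self_nonneg _) (Real.rpow_nonneg (norm_nonneg _) _)
  have hIDw_nn : 0 ≤ ∫ x in D, (u - ut) x ^ 2 := integral_nonneg fun x => sq_nonneg _
  have hH2 : H ^ 2 = (∫ x in D, (u - ut) x ^ 2) + Bform s (D ×ˢ D) (u - ut) (u - ut) := by
    rw [hHdef]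
    unfold HsNorm
    exact Real.sq_sqrt (by linarith)
  have hHnn : 0 ≤ H := Real.sqrt_nonneg _
  have hsqrtW_le : Real.sqrt (∫ x, (u - ut) x ^ 2) ≤ H := by
    rw [hWD, hHdef]
    unfold HsNorm
    exact Real.sqrt_le_sqrt (by linarith)
  have hBT_nn : 0 ≤ Bform s T (u - ut) (u - ut) := by
    rw [Bform_eq_setIntegral]
    refine integral_nonneg fun p => ?_
    unfold gagIntegrand
    exact div_nonneg (mul_self_nonneg _) (Real.rpow_nonneg (norm_nonneg _) _)
  have hE2 : (energyNorm s Ω lam (u - ut)) ^ 2 = cns n s / 4 * Bform s T (u - ut) (u - ut) := by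
    unfold energyNorm
    exact Real.sq_sqrt (mul_nonneg (div_nonneg hcpos.le (by norm_num)) hBT_nn)
  have hco := hcoer (u - ut) hwT
  have hCHnn : 0 ≤ C₁ * H := mul_nonneg hC₁.le hHnn
  have hsq : (C₁ * H) ^ 2 ≤ (energyNorm s Ω lam (u - ut)) ^ 2 := pow_le_pow_left₀ hCHnn hco 2
  set L : ℝ := L2NormOn Ω u with hLdef
  have hLnn : 0 ≤ L := Real.sqrt_nonneg _
  have hXle : (∫ x, g x) ≤ L * H := by
    calc (∫ x, g x) ≤ Real.sqrt (∫ x, u x ^ 2) * Real.sqrt (∫ x, (u - ut) x ^ 2) := hCS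
      _ = L * Real.sqrt (∫ x, (u - ut) x ^ 2) := by rw [hL]
      _ ≤ L * H := mul_le_mul_of_nonneg_left hsqrtW_le hLnn
  -- the main chain of inequalities
  have hmain : C₁ ^ 2 * H ^ 2 ≤ Kc * lam ^ (-(2 * s)) * (L * H) := by
    have hΛnn : 0 ≤ lam ^ (-(2 * s)) := Real.rpow_nonneg hlam0.le _
    calc C₁ ^ 2 * H ^ 2 = (C₁ * H) ^ 2 := by ring
      _ ≤ (energyNorm s Ω lam (u - ut)) ^ 2 := hsq
      _ = cns n s / 4 * Bform s T (u - ut) (u - ut) := hE2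
      _ = cns n s / 4 * (- ∫ p in Tᶜ, gagIntegrand s u (u - ut) p) := by rw [hkey]
      _ ≤ cns n s / 4 * |∫ p in Tᶜ, gagIntegrand s u (u - ut) p| :=
          mul_le_mul_of_nonneg_left (neg_le_abs _) (div_nonneg hcpos.le (by norm_num))
      _ ≤ cns n s / 4 * (2 * ((∫ x, g x) * (∫ z, kv z))) :=
          mul_le_mul_of_nonneg_left habs (div_nonneg hcpos.le (by norm_num))
      _ = cns n s / (4 * s) * (A * lam ^ (-(2 * s)) * (∫ x, g x)) := by
          rw [hkvval]
          field_simp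
      _ ≤ (Real.exp 1 * Real.Gamma (((n : ℝ) + 2) / 2) / Real.sqrt π)
            * (A * lam ^ (-(2 * s)) * (∫ x, g x)) :=
          mul_le_mul_of_nonneg_right (cns_div_le hs0 hs1)
            (mul_nonneg (mul_nonneg hA0 hΛnn) hgnn_int)
      _ = Kc * lam ^ (-(2 * s)) * (∫ x, g x) := by rw [hKcdef]; ring
      _ ≤ Kc * lam ^ (-(2 * s)) * (L * H) :=
          mul_le_mul_of_nonneg_left hXle (mul_nonneg hKc0 hΛnn)
  -- conclude
  have hlamI' : 0 < lam - I := sub_pos.2 hlamI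
  have hpow_pos : (0 : ℝ) < (lam - I) ^ (2 * s) := Real.rpow_pos_of_pos hlamI' _
  have hKpos : (0 : ℝ) < Kc + 1 := by linarith
  have hRfactor : Kc * lam ^ (-(2 * s)) ≤ (Kc + 1) / (s * (lam - I) ^ (2 * s)) := by
    rw [Real.rpow_neg hlam0.le, ← div_eq_mul_inv]
    have hp1 : (lam - I) ^ (2 * s) ≤ lam ^ (2 * s) :=
      Real.rpow_le_rpow hlamI'.le (by linarith) (by positivity)
    have hp2 : s * (lam - I) ^ (2 * s) ≤ lam ^ (2 * s) :=
      calc s * (lam - I) ^ (2 * s) ≤ 1 * lam ^ (2 * s) :=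
            mul_le_mul hs1.le hp1 hpow_pos.le zero_le_one
        _ = lam ^ (2 * s) := one_mul _
    exact div_le_div₀ hKpos.le (by linarith) (by positivity) hp2
  have hfinal : C₁ ^ 2 * H ≤ (Kc + 1) / (s * (lam - I) ^ (2 * s)) * L := by
    rcases eq_or_lt_of_le hHnn with hH0 | hHpos
    · rw [← hH0, mul_zero]
      exact mul_nonneg (div_nonneg hKpos.le (by positivity)) hLnn
    · have step : (C₁ ^ 2 * H) * H ≤ (Kc * lam ^ (-(2 * s)) * L) * H := by
        calc (C₁ ^ 2 * H) * H = C₁ ^ 2 * H ^ 2 := by ring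
          _ ≤ Kc * lam ^ (-(2 * s)) * (L * H) := hmain
          _ = (Kc * lam ^ (-(2 * s)) * L) * H := by ring
      have step2 : C₁ ^ 2 * H ≤ Kc * lam ^ (-(2 * s)) * L :=
        le_of_mul_le_mul_right step hHpos
      calc C₁ ^ 2 * H ≤ Kc * lam ^ (-(2 * s)) * L := step2
        _ ≤ (Kc + 1) / (s * (lam - I) ^ (2 * s)) * L :=
            mul_le_mul_of_nonneg_right hRfactor hLnn
  have hHbound : H ≤ (Kc + 1) / (C₁ ^ 2 * s * (lam - I) ^ (2 * s)) * L := by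
    have hsp : (0 : ℝ) < s * (lam - I) ^ (2 * s) := by positivity
    rw [div_mul_eq_mul_div, le_div_iff₀ (show (0:ℝ) < C₁ ^ 2 * s * (lam - I) ^ (2 * s)
      by positivity)]
    have h1 : (C₁ ^ 2 * H) * (s * (lam - I) ^ (2 * s))
        ≤ ((Kc + 1) / (s * (lam - I) ^ (2 * s)) * L) * (s * (lam - I) ^ (2 * s)) :=
      mul_le_mul_of_nonneg_right hfinal hsp.le
    have h2 : ((Kc + 1) / (s * (lam - I) ^ (2 * s)) * L) * (s * (lam - I) ^ (2 * s))
        = (Kc + 1) * L := by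
      rw [mul_right_comm, div_mul_cancel₀ _ hsp.ne']
    calc H * (C₁ ^ 2 * s * (lam - I) ^ (2 * s))
        = (C₁ ^ 2 * H) * (s * (lam - I) ^ (2 * s)) := by ring
      _ ≤ (Kc + 1) * L := h2 ▸ h1
  refine ⟨hHbound, ?_⟩
  have hL2w : L2NormOn Ω (u - ut) ≤ H := by
    unfold L2NormOn
    rw [hHdef]
    unfold HsNorm
    apply Real.sqrt_le_sqrt
    rw [hWΩ, hWD]
    linarith
  exact hL2w.trans hHbound
end
end

section
/- Let f ∈ L²(Ω), let u be a weak solution of the fractional Laplacian problem and ũ a weak solution of the truncated nonlocal problem, both with the same data f, and let v be a test function such that the integrand of B_{ℝⁿ×ℝⁿ}(u,v) and the integrand of B_T(ũ,v) are absolutely integrable. Then, with T' = {(x,y) ∈ (Ω∪Ω_I)×(Ω∪Ω_I) : |y−x| ≥ λ} and Ω_c = ℝⁿ∖(Ω∪Ω_I), one has |B_T(u−ũ, v)| ≤ |B_{T'}(u,v)| + |B_{(Ω∪Ω_I)×Ω_c}(u,v)| + |B_{Ω_c×ℝⁿ}(u,v)|. -/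
open MeasureTheory Real Set

noncomputable section

/-- Let `u` be a weak solution of the fractional Laplacian problem and
`ũ` a weak solution of the truncated nonlocal problem with the same data `f ∈ L²(Ω)`, and
let `v` be a test function with the integrands of `B_{ℝⁿ×ℝⁿ}(u,v)` and `B_T(ũ,v)`
absolutely integrable. Then, with `T' = {(x,y) ∈ (Ω∪Ω_I)² : |y−x| ≥ λ}` and
`Ω_c = ℝⁿ∖(Ω∪Ω_I)`,
`|B_T(u−ũ,v)| ≤ |B_{T'}(u,v)| + |B_{(Ω∪Ω_I)×Ω_c}(u,v)| + |B_{Ω_c×ℝⁿ}(u,v)|`. -/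
theorem stmt8 (n : ℕ) (hn : 1 ≤ n) (s : ℝ) (hs : s ∈ Set.Ioo (0 : ℝ) 1)
    (Ω : Set (Eucl n)) (hΩne : Ω.Nonempty) (hΩo : IsOpen Ω) (hΩb : Bornology.IsBounded Ω)
    (lam : ℝ) (hlam : 0 < lam)
    (f : Eucl n → ℝ) (hf : Measurable f) (hf2 : IntegrableOn (fun x => f x ^ 2) Ω)
    (u ut : Eucl n → ℝ) (hu : IsFracSol s Ω f u) (hut : IsTruncSol s Ω lam f ut)
    (v : Eucl n → ℝ) (hv : IsTestFun s Ω v)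
    (hiu : Integrable (gagIntegrand s u v))
    (hiut : IntegrableOn (gagIntegrand s ut v) (Tset Ω lam)) :
    |Bform s (Tset Ω lam) (u - ut) v| ≤
      |Bform s {p : Eucl n × Eucl n |
          p.1 ∈ Ω ∪ interDom Ω lam ∧ p.2 ∈ Ω ∪ interDom Ω lam ∧ lam ≤ ‖p.2 - p.1‖} u v| +
      |Bform s ((Ω ∪ interDom Ω lam) ×ˢ (Ω ∪ interDom Ω lam)ᶜ) u v| +
      |Bform s ((Ω ∪ interDom Ω lam)ᶜ ×ˢ (Set.univ : Set (Eucl n))) u v| := by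
  classical
  set G := Ω ∪ interDom Ω lam with hG
  -- G is open
  have hGopen : IsOpen G := by
    have hGU : G = ⋃ x ∈ Ω, Metric.ball x lam := by
      ext y
      simp only [hG, Set.mem_union, interDom, Set.mem_setOf_eq, Set.mem_iUnion,
        Metric.mem_ball, dist_eq_norm]
      constructor
      · rintro (hy | ⟨-, x, hx, hxy⟩)
        · exact ⟨y, hy, by simpa using hlam⟩
        · exact ⟨x, hx, hxy⟩
      · rintro ⟨x, hx, hxy⟩
        by_cases hy : y ∈ Ω
        · exact Or.inl hy
        · exact Or.inr ⟨hy, x, hx, hxy⟩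
    rw [hGU]
    exact isOpen_biUnion fun x _ => Metric.isOpen_ball
  have hGm : MeasurableSet G := hGopen.measurableSet
  have hcont : Continuous fun p : Eucl n × Eucl n => ‖p.2 - p.1‖ :=
    (continuous_snd.sub continuous_fst).norm
  have hTeq : Tset Ω lam =
      (G ×ˢ G) ∩ ((fun p : Eucl n × Eucl n => ‖p.2 - p.1‖) ⁻¹' Set.Iio lam) := by
    ext p
    simp only [Tset, Set.mem_setOf_eq, Set.mem_inter_iff, Set.mem_prod, Set.mem_preimage,
      Set.mem_Iio, hG]
    tauto
  have hTm : MeasurableSet (Tset Ω lam) := by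
    rw [hTeq]
    exact (hGm.prod hGm).inter (hcont.measurable measurableSet_Iio)
  set T' : Set (Eucl n × Eucl n) := {p | p.1 ∈ G ∧ p.2 ∈ G ∧ lam ≤ ‖p.2 - p.1‖} with hT'
  set A : Set (Eucl n × Eucl n) := G ×ˢ Gᶜ with hA
  set B : Set (Eucl n × Eucl n) := Gᶜ ×ˢ (Set.univ : Set (Eucl n)) with hB
  have hT'm : MeasurableSet T' := by
    have : T' = (G ×ˢ G) ∩ ((fun p : Eucl n × Eucl n => ‖p.2 - p.1‖) ⁻¹' Set.Ici lam) := by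
      ext p
      simp only [hT', Set.mem_setOf_eq, Set.mem_inter_iff, Set.mem_prod, Set.mem_preimage,
        Set.mem_Ici]
      tauto
    rw [this]
    exact (hGm.prod hGm).inter (hcont.measurable measurableSet_Ici)
  have hAm : MeasurableSet A := hGm.prod hGm.compl
  have hBm : MeasurableSet B := hGm.compl.prod MeasurableSet.univ
  -- the complement of T decomposes
  have hcompl : (Tset Ω lam)ᶜ = T' ∪ (A ∪ B) := by
    ext p
    simp only [Set.mem_compl_iff, Tset, Set.mem_setOf_eq, Set.mem_union, hT', hA, hB,
      Set.mem_prod, Set.mem_compl_iff, Set.mem_univ, and_true, not_and, not_lt, hG]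
    constructor
    · intro h
      by_cases h1 : p.1 ∈ Ω ∪ interDom Ω lam
      · by_cases h2 : p.2 ∈ Ω ∪ interDom Ω lam
        · exact Or.inl ⟨h1, h2, h h1 h2⟩
        · exact Or.inr (Or.inl ⟨h1, h2⟩)
      · exact Or.inr (Or.inr h1)
    · rintro (⟨h1, h2, h3⟩ | ⟨h1, h2⟩ | h1) g1 g2
      · exact h3
      · exact absurd g2 h2
      · exact absurd g1 h1
  -- Disjointness
  have hdAB : Disjoint A B := by
    rw [Set.disjoint_left]
    rintro p ⟨hp1, -⟩ ⟨hq1, -⟩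
    exact hq1 hp1
  have hdT' : Disjoint T' (A ∪ B) := by
    rw [Set.disjoint_left]
    rintro p ⟨hp1, hp2, -⟩ (⟨-, hq2⟩ | ⟨hq1, -⟩)
    · exact hq2 hp2
    · exact hq1 hp1
  -- splitting the integral
  have hBuniv : Bform s Set.univ u v =
      Bform s (Tset Ω lam) u v + (Bform s T' u v + (Bform s A u v + Bform s B u v)) := by
    have e0 : Bform s Set.univ u v = ∫ p, gagIntegrand s u v p := by
      simp only [Bform, gagIntegrand, MeasureTheory.setIntegral_univ]
    have e1 : (∫ p in Tset Ω lam, gagIntegrand s u v p) +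
        (∫ p in (Tset Ω lam)ᶜ, gagIntegrand s u v p) = ∫ p, gagIntegrand s u v p :=
      MeasureTheory.integral_add_compl hTm hiu
    have e2 : (∫ p in (Tset Ω lam)ᶜ, gagIntegrand s u v p) =
        (∫ p in T', gagIntegrand s u v p) + ∫ p in A ∪ B, gagIntegrand s u v p := by
      rw [hcompl]
      exact MeasureTheory.setIntegral_union hdT' (hAm.union hBm)
        hiu.integrableOn hiu.integrableOn
    have e3 : (∫ p in A ∪ B, gagIntegrand s u v p) =
        (∫ p in A, gagIntegrand s u v p) + ∫ p in B, gagIntegrand s u v p :=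
      MeasureTheory.setIntegral_union hdAB hBm hiu.integrableOn hiu.integrableOn
    show (∫ p in Set.univ, gagIntegrand s u v p) = _
    rw [MeasureTheory.setIntegral_univ, ← e1, e2, e3]
    rfl
  -- the weak solution equations
  have hc : cns n s ≠ 0 := by
    have h1 : 0 < Real.Gamma ((n + 2) / 2) := Real.Gamma_pos_of_pos (by positivity)
    have h2 : 0 < Real.Gamma (1 / 2) := Real.Gamma_pos_of_pos (by norm_num)
    have h3 : 0 < Real.Gamma (1 - s) := Real.Gamma_pos_of_pos (by linarith [hs.2])
    have h4 : 0 < (2 : ℝ) ^ (2 * s) := Real.rpow_pos_of_pos (by norm_num) _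
    have : 0 < cns n s := div_pos (mul_pos (mul_pos hs.1 h4) h1) (mul_pos h2 h3)
    exact ne_of_gt this
  have Eu := (hu.2 v hv).2
  have Et := (hut.2 v hv).2
  have hkey : Bform s Set.univ u v = Bform s (Tset Ω lam) ut v := by
    have : cns n s / 2 * Bform s Set.univ u v = cns n s / 2 * Bform s (Tset Ω lam) ut v := by
      rw [Eu, Et]
    exact mul_left_cancel₀ (div_ne_zero hc two_ne_zero) this
  -- linearity in the first argument
  have hsub : Bform s (Tset Ω lam) (u - ut) v =
      Bform s (Tset Ω lam) u v - Bform s (Tset Ω lam) ut v := by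
    have hpt : ∀ p : Eucl n × Eucl n, gagIntegrand s (u - ut) v p =
        gagIntegrand s u v p - gagIntegrand s ut v p := by
      intro p
      simp only [gagIntegrand, Pi.sub_apply]
      ring
    show (∫ p in Tset Ω lam, gagIntegrand s (u - ut) v p) =
      (∫ p in Tset Ω lam, gagIntegrand s u v p) - ∫ p in Tset Ω lam, gagIntegrand s ut v p
    rw [← MeasureTheory.integral_sub hiu.integrableOn hiut]
    exact MeasureTheory.integral_congr_ae (Filter.Eventually.of_forall hpt)
  have hmain : Bform s (Tset Ω lam) (u - ut) v =
      -(Bform s T' u v + (Bform s A u v + Bform s B u v)) := by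
    rw [hsub, ← hkey, hBuniv]
    ring
  rw [hmain]
  calc |-(Bform s T' u v + (Bform s A u v + Bform s B u v))|
      = |Bform s T' u v + (Bform s A u v + Bform s B u v)| := abs_neg _
    _ ≤ |Bform s T' u v| + |Bform s A u v + Bform s B u v| := abs_add_le _ _
    _ ≤ |Bform s T' u v| + (|Bform s A u v| + |Bform s B u v|) := by
        gcongr; exact abs_add_le _ _
    _ = |Bform s T' u v| + |Bform s A u v| + |Bform s B u v| := by ring
end
end

section
/- Let V be a real vector space, let A : V×V → ℝ be a symmetric bilinear form with A(v,v) ≥ 0 for all v ∈ V, and set |||v||| = (A(v,v))^{1/2}. Let ‖·‖ be a seminorm on V and C₁, C₂ > 0 constants with C₁·‖v‖ ≤ |||v||| ≤ C₂·‖v‖ for all v ∈ V. Let W ⊆ V be a subspace, A_N : V×V → ℝ a bilinear form, F : V → ℝ a linear functional, and C₅ > 0 with A_N(w,w) ≥ C₅·|||w|||² for all w ∈ W. Suppose ũ ∈ V satisfies A(ũ,w) = F(w) for all w ∈ W, and ũ_N ∈ W satisfies A_N(ũ_N,w) = F(w) for all w ∈ W. If v_N ∈ W and D ≥ 0 satisfy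 |A(v_N,w) − A_N(v_N,w)| ≤ D·|||w||| for all w ∈ W, then ‖ũ − ũ_N‖ ≤ (1 + C₂/(C₁·C₅))·‖ũ − v_N‖ + D/(C₁·C₅). -/
open Real

noncomputable section

/-- Cauchy–Schwarz for a nonnegative symmetric bilinear form. -/
lemma cs_aux {V : Type*} [AddCommGroup V] [Module ℝ V]
    (A : V →ₗ[ℝ] V →ₗ[ℝ] ℝ) (hAsymm : ∀ v w, A v w = A w v) (hApos : ∀ v, 0 ≤ A v v)
    (v w : V) : |A v w| ≤ Real.sqrt (A v v) * Real.sqrt (A w w) := by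
  have hd : discrim (A w w) (2 * A v w) (A v v) ≤ 0 := by
    apply discrim_le_zero
    intro t
    have := hApos (v + t • w)
    simp only [map_add, map_smul, LinearMap.add_apply, LinearMap.smul_apply,
      smul_eq_mul] at this
    rw [hAsymm w v] at this
    nlinarith [this]
  rw [discrim] at hd
  have hsq : (A v w) ^ 2 ≤ A v v * A w w := by nlinarith
  calc |A v w| = Real.sqrt ((A v w) ^ 2) := by rw [Real.sqrt_sq_eq_abs]
    _ ≤ Real.sqrt (A v v * A w w) := Real.sqrt_le_sqrt hsq
    _ = Real.sqrt (A v v) * Real.sqrt (A w w) := Real.sqrt_mul (hApos v) _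

/-- abstract Strang-type estimate in an equivalent seminorm. Let `A`
be a nonnegative symmetric bilinear form on a real vector space `V` with associated
seminorm `|||v||| = √(A(v,v))`, and let `‖·‖` be a seminorm on `V` with
`C₁·‖v‖ ≤ |||v||| ≤ C₂·‖v‖` for all `v`. Let `W ⊆ V` be a subspace, `A_N` a bilinear
form coercive on `W` with constant `C₅ > 0`, and `F` a linear functional. If
`A(ũ,·) = F` on `W`, `ũ_N ∈ W` with `A_N(ũ_N,·) = F` on `W`, and `v_N ∈ W`, `D ≥ 0`
satisfy `|A(v_N,w) − A_N(v_N,w)| ≤ D·|||w|||` for all `w ∈ W`, then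
`‖ũ − ũ_N‖ ≤ (1 + C₂/(C₁·C₅))·‖ũ − v_N‖ + D/(C₁·C₅)`. -/
theorem stmt13 (V : Type*) [AddCommGroup V] [Module ℝ V]
    (A : V →ₗ[ℝ] V →ₗ[ℝ] ℝ) (hAsymm : ∀ v w, A v w = A w v) (hApos : ∀ v, 0 ≤ A v v)
    (N : V → ℝ) (hNsmul : ∀ (a : ℝ) (v : V), N (a • v) = |a| * N v)
    (hNtri : ∀ v w : V, N (v + w) ≤ N v + N w)
    (C₁ C₂ : ℝ) (hC₁ : 0 < C₁) (hC₂ : 0 < C₂)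
    (hlow : ∀ v : V, C₁ * N v ≤ Real.sqrt (A v v))
    (hupp : ∀ v : V, Real.sqrt (A v v) ≤ C₂ * N v)
    (W : Submodule ℝ V)
    (AN : V →ₗ[ℝ] V →ₗ[ℝ] ℝ) (F : V →ₗ[ℝ] ℝ)
    (C₅ : ℝ) (hC₅ : 0 < C₅)
    (hcoer : ∀ w ∈ W, C₅ * Real.sqrt (A w w) ^ 2 ≤ AN w w)
    (ut : V) (hut : ∀ w ∈ W, A ut w = F w)
    (utN : V) (hutN : utN ∈ W) (hutNeq : ∀ w ∈ W, AN utN w = F w)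
    (vN : V) (hvN : vN ∈ W) (D : ℝ) (hD : 0 ≤ D)
    (hΔ : ∀ w ∈ W, |A vN w - AN vN w| ≤ D * Real.sqrt (A w w)) :
    N (ut - utN) ≤ (1 + C₂ / (C₁ * C₅)) * N (ut - vN) + D / (C₁ * C₅) := by
  set e : V := utN - vN with he
  have heW : e ∈ W := W.sub_mem hutN hvN
  have hNe : ∀ v, 0 ≤ N v := by
    intro v
    nlinarith [hupp v, Real.sqrt_nonneg ((A v) v)]
  have hsqrtnn : ∀ v : V, (0:ℝ) ≤ Real.sqrt (A v v) := fun v => Real.sqrt_nonneg _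
  -- key bound on |||e|||
  have hkey : C₅ * Real.sqrt (A e e) ^ 2 ≤
      (Real.sqrt (A (ut - vN) (ut - vN)) + D) * Real.sqrt (A e e) := by
    have h1 : AN e e = A ut e - AN vN e := by
      have : AN utN e = F e := hutNeq e heW
      have h2 : A ut e = F e := hut e heW
      simp only [he, map_sub, LinearMap.sub_apply] at *
      linarith
    have h2 : A ut e - AN vN e = A (ut - vN) e + (A vN e - AN vN e) := by
      simp only [map_sub, LinearMap.sub_apply]; ring
    have h3 : A (ut - vN) e ≤ Real.sqrt (A (ut - vN) (ut - vN)) * Real.sqrt (A e e) :=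
      le_trans (le_abs_self _) (cs_aux A hAsymm hApos _ _)
    have h4 : A vN e - AN vN e ≤ D * Real.sqrt (A e e) :=
      le_trans (le_abs_self _) (hΔ e heW)
    have h5 := hcoer e heW
    nlinarith
  have hebound : C₅ * Real.sqrt (A e e) ≤ Real.sqrt (A (ut - vN) (ut - vN)) + D := by
    rcases eq_or_lt_of_le (hsqrtnn e) with h | h
    · rw [← h, mul_zero]; positivity
    · nlinarith [hkey, h]
  have hNebound : N e ≤ (C₂ * N (ut - vN) + D) / (C₁ * C₅) := by
    rw [le_div_iff₀ (by positivity)]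
    nlinarith [hlow e, hebound, hupp (ut - vN), hC₅.le, hC₁.le]
  have htri : N (ut - utN) ≤ N (ut - vN) + N e := by
    have h := hNtri (ut - vN) (vN - utN)
    have h2 : ut - vN + (vN - utN) = ut - utN := by abel
    rw [h2] at h
    have h3 : N (vN - utN) = N e := by
      have : vN - utN = (-1 : ℝ) • e := by simp [he]
      rw [this, hNsmul]; simp
    linarith
  have hfinal : (1 + C₂ / (C₁ * C₅)) * N (ut - vN) + D / (C₁ * C₅)
      = N (ut - vN) + (C₂ * N (ut - vN) + D) / (C₁ * C₅) := by
    field_simp; ring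
  linarith [htri, hNebound, hfinal.ge, hfinal.le]
end
end
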